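/- Let p be an odd prime and K a field equipped with a nonarchimedean (ultrametric) multiplicative norm ‖·‖ such that ‖(p : K)‖ = p^{-1}. Let ρ, q ∈ K satisfy ρ ≠ q, ‖ρ − 1‖ < p^{-1/(p−1)} and ‖q − 1‖ < p^{-1/(p−1)}. Then for every natural number n, ‖[p^n]_{ρ,q}‖ = p^{-n}, where [m]_{ρ,q} := (ρ^m − q^m)/(ρ − q). -/

import Mathlib

section Aux

variable {K : Type*} [NormedField K]

lemma aux_nat_norm_le_one (hna : ∀ x y : K, ‖x + y‖ ≤ max ‖x‖ ‖y‖) (m : ℕ) :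
    ‖(m : K)‖ ≤ 1 := by
  induction m with
  | zero => simp
  | succ k ih =>
    push_cast
    calc ‖(k : K) + 1‖ ≤ max ‖(k : K)‖ ‖(1 : K)‖ := hna _ _
    _ ≤ 1 := by simp [ih]

lemma aux_sum_le (hna : ∀ x y : K, ‖x + y‖ ≤ max ‖x‖ ‖y‖) {ι : Type*}
    (s : Finset ι) (f : ι → K) {B : ℝ} (hB : 0 ≤ B) (h : ∀ i ∈ s, ‖f i‖ ≤ B) :
    ‖∑ i ∈ s, f i‖ ≤ B := by
  classical
  induction s using Finset.induction with
  | empty => simpa using hB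
  | @insert x t hx ih =>
    rw [Finset.sum_insert hx]
    exact (hna _ _).trans (max_le (h x (by simp)) (ih fun i hi => h i (by simp [hi])))

lemma aux_dom (hna : ∀ x y : K, ‖x + y‖ ≤ max ‖x‖ ‖y‖) {a b : K} (h : ‖b‖ < ‖a‖) :
    ‖a + b‖ = ‖a‖ := by
  have h1 : ‖a + b‖ ≤ ‖a‖ := (hna a b).trans (by simp [h.le])
  have h2 : ‖a‖ ≤ max ‖a + b‖ ‖b‖ := by
    calc ‖a‖ = ‖a + b + -b‖ := by ring_nf
    _ ≤ max ‖a + b‖ ‖-b‖ := hna _ _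
    _ = max ‖a + b‖ ‖b‖ := by rw [norm_neg]
  rcases max_cases ‖a + b‖ ‖b‖ with ⟨he, _⟩ | ⟨he, _⟩
  · rw [he] at h2; exact le_antisymm h1 h2
  · rw [he] at h2; exact absurd (h2.trans_lt h) (lt_irrefl _)

lemma aux_norm_one_of (hna : ∀ x y : K, ‖x + y‖ ≤ max ‖x‖ ‖y‖) {a : K}
    (h : ‖a - 1‖ < 1) : ‖a‖ = 1 := by
  have : a = 1 + (a - 1) := by ring
  rw [this, aux_dom hna (by simpa using h)]; simp

/-- Key: norm of `(1+u)^p - 1`. -/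
lemma aux_key (p : ℕ) (hp : p.Prime)
    (hna : ∀ x y : K, ‖x + y‖ ≤ max ‖x‖ ‖y‖)
    (hpK : ‖(p : K)‖ = (p : ℝ)⁻¹)
    {u : K} (hu : ‖u‖ < (p : ℝ) ^ (-(1 : ℝ) / ((p : ℝ) - 1))) :
    ‖(1 + u) ^ p - 1‖ = (p : ℝ)⁻¹ * ‖u‖ := by
  have hp1 : (1 : ℝ) < p := by exact_mod_cast hp.one_lt
  have hppos : (0 : ℝ) < p := by linarith
  have hrlt1 : (p : ℝ) ^ (-(1 : ℝ) / ((p : ℝ) - 1)) < 1 :=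
    Real.rpow_lt_one_of_one_lt_of_neg hp1 (by
      apply div_neg_of_neg_of_pos <;> [norm_num; linarith])
  have hu1 : ‖u‖ < 1 := hu.trans hrlt1
  rcases eq_or_ne u 0 with rfl | hu0
  · simp
  have hupos : 0 < ‖u‖ := norm_pos_iff.mpr hu0
  -- the key power inequality : ‖u‖^(p-1) < p⁻¹
  have hpow : ‖u‖ ^ (p - 1) < (p : ℝ)⁻¹ := by
    have h1 : ‖u‖ ^ (p - 1) < ((p : ℝ) ^ (-(1 : ℝ) / ((p : ℝ) - 1))) ^ (p - 1) := by
      apply pow_lt_pow_left₀ hu (norm_nonneg u)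
      have := hp.two_le; omega
    have h2 : ((p : ℝ) ^ (-(1 : ℝ) / ((p : ℝ) - 1))) ^ (p - 1) = (p : ℝ)⁻¹ := by
      rw [← Real.rpow_natCast ((p : ℝ) ^ (-(1 : ℝ) / ((p : ℝ) - 1))) (p - 1),
        ← Real.rpow_mul hppos.le]
      have hcast : ((p - 1 : ℕ) : ℝ) = (p : ℝ) - 1 := by
        have := hp.two_le
        push_cast [Nat.cast_sub (by omega : 1 ≤ p)]
        ring
      rw [hcast, div_mul_cancel₀, Real.rpow_neg_one]
      linarith
    linarith
  -- binomial expansion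
  have hexp : (1 + u) ^ p - 1 = (p : K) * u +
      ∑ k ∈ Finset.Ico 2 (p + 1), u ^ k * (p.choose k : K) := by
    have := add_pow u 1 p
    rw [add_comm 1 u, this]
    have h2p : 2 ≤ p + 1 := by have := hp.two_le; omega
    rw [Finset.range_eq_Ico, ← Finset.sum_Ico_consecutive _ (by norm_num : 0 ≤ 2) h2p]
    have : ∑ k ∈ Finset.Ico 0 2, u ^ k * 1 ^ (p - k) * (p.choose k : K)
        = 1 + (p : K) * u := by
      rw [show Finset.Ico 0 2 = {0, 1} by rfl]
      simp [Finset.sum_insert, mul_comm]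
    rw [this]
    have : ∀ k ∈ Finset.Ico 2 (p + 1),
        u ^ k * 1 ^ (p - k) * (p.choose k : K) = u ^ k * (p.choose k : K) := by
      intro k _; rw [one_pow, mul_one]
    rw [Finset.sum_congr rfl this]
    ring
  set E := ∑ k ∈ Finset.Ico 2 (p + 1), u ^ k * (p.choose k : K) with hE
  -- bound on E
  have hB : ‖E‖ ≤ max ((p : ℝ)⁻¹ * ‖u‖ ^ 2) (‖u‖ ^ p) := by
    apply aux_sum_le hna
    · positivity
    · intro k hk
      simp only [Finset.mem_Ico] at hk
      rw [norm_mul, norm_pow]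
      rcases eq_or_lt_of_le (by omega : k ≤ p) with rfl | hkp
      · simp only [Nat.choose_self, Nat.cast_one, norm_one, mul_one]
        exact le_max_right _ _
      · refine le_max_of_le_left ?_
        have hdvd : p ∣ p.choose k := hp.dvd_choose_self (by omega) hkp
        obtain ⟨m, hm⟩ := hdvd
        have hnorm : ‖(p.choose k : K)‖ ≤ (p : ℝ)⁻¹ := by
          rw [hm]
          push_cast
          rw [norm_mul, hpK]
          calc (p : ℝ)⁻¹ * ‖(m : K)‖ ≤ (p : ℝ)⁻¹ * 1 := by
                apply mul_le_mul_of_nonneg_left (aux_nat_norm_le_one hna m)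
                positivity
          _ = (p : ℝ)⁻¹ := mul_one _
        calc ‖u‖ ^ k * ‖(p.choose k : K)‖ ≤ ‖u‖ ^ 2 * (p : ℝ)⁻¹ := by
              apply mul_le_mul _ hnorm (norm_nonneg _) (by positivity)
              exact pow_le_pow_of_le_one (norm_nonneg u) hu1.le hk.1
        _ = (p : ℝ)⁻¹ * ‖u‖ ^ 2 := mul_comm _ _
  have hstrict : ‖E‖ < ‖(p : K) * u‖ := by
    rw [norm_mul, hpK]
    refine hB.trans_lt (max_lt ?_ ?_)
    · have : ‖u‖ ^ 2 < ‖u‖ := by nlinarith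
      nlinarith [inv_pos.mpr hppos]
    · have hps : p - 1 + 1 = p := by have := hp.two_le; omega
      calc ‖u‖ ^ p = ‖u‖ ^ (p - 1) * ‖u‖ := by rw [← pow_succ, hps]
      _ < (p : ℝ)⁻¹ * ‖u‖ := by
          apply mul_lt_mul_of_pos_right hpow hupos
  rw [hexp, aux_dom hna hstrict, norm_mul, hpK]

end Aux

/-- The (ρ,q)-number `[m]_{ρ,q} = (ρ^m - q^m)/(ρ - q)`. -/
noncomputable def pqNum {K : Type*} [Field K] (ρ q : K) (m : ℕ) : K :=
  (ρ ^ m - q ^ m) / (ρ - q)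

/-- For an odd prime `p` and a nonarchimedean multiplicative norm on a field `K`
with `‖p‖ = p⁻¹`, if `ρ ≠ q`, `‖ρ − 1‖ < p^{-1/(p−1)}` and `‖q − 1‖ < p^{-1/(p−1)}`,
then `‖[p^n]_{ρ,q}‖ = p^{-n}` for every `n`. -/
theorem norm_pqNum_pow_prime {K : Type*} [NormedField K]
    (p : ℕ) (hp : p.Prime) (hodd : Odd p)
    (hna : ∀ x y : K, ‖x + y‖ ≤ max ‖x‖ ‖y‖)
    (hpK : ‖(p : K)‖ = (p : ℝ)⁻¹)
    (ρ q : K) (hρq : ρ ≠ q)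
    (hρ : ‖ρ - 1‖ < (p : ℝ) ^ (-(1 : ℝ) / ((p : ℝ) - 1)))
    (hq : ‖q - 1‖ < (p : ℝ) ^ (-(1 : ℝ) / ((p : ℝ) - 1)))
    (n : ℕ) :
    ‖pqNum ρ q (p ^ n)‖ = (p : ℝ) ^ (-(n : ℤ)) := by
  set r : ℝ := (p : ℝ) ^ (-(1 : ℝ) / ((p : ℝ) - 1)) with hr
  have hp1 : (1 : ℝ) < p := by exact_mod_cast hp.one_lt
  have hppos : (0 : ℝ) < p := by linarith
  have hrlt1 : r < 1 :=
    Real.rpow_lt_one_of_one_lt_of_neg hp1 (by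
      apply div_neg_of_neg_of_pos <;> [norm_num; linarith])
  have hinvle1 : (p : ℝ)⁻¹ ≤ 1 := by
    rw [inv_le_one_iff₀]; right; linarith
  -- main induction
  have main : ∀ n : ℕ, ‖ρ ^ p ^ n - q ^ p ^ n‖ = ((p : ℝ)⁻¹) ^ n * ‖ρ - q‖ ∧
      ‖ρ ^ p ^ n - 1‖ < r ∧ ‖q ^ p ^ n - 1‖ < r := by
    intro n
    induction n with
    | zero => simpa using ⟨hρ, hq⟩
    | succ m ih =>
      obtain ⟨ihd, iha, ihb⟩ := ih
      set a := ρ ^ p ^ m with ha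
      set b := q ^ p ^ m with hb
      have hstep : ∀ x : K, ‖x - 1‖ < r → ‖x ^ p - 1‖ = (p : ℝ)⁻¹ * ‖x - 1‖ := by
        intro x hx
        have h := aux_key p hp hna hpK (u := x - 1) (by simpa using hx)
        have he : (1 : K) + (x - 1) = x := by ring
        rw [he] at h
        exact h
      have hane : ‖ρ ^ p ^ (m + 1) - 1‖ < r := by
        rw [pow_succ, pow_mul, ← ha, hstep a iha]
        calc (p : ℝ)⁻¹ * ‖a - 1‖ ≤ 1 * ‖a - 1‖ :=
              mul_le_mul_of_nonneg_right hinvle1 (norm_nonneg _)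
        _ = ‖a - 1‖ := one_mul _
        _ < r := iha
      have hbne : ‖q ^ p ^ (m + 1) - 1‖ < r := by
        rw [pow_succ, pow_mul, ← hb, hstep b ihb]
        calc (p : ℝ)⁻¹ * ‖b - 1‖ ≤ 1 * ‖b - 1‖ :=
              mul_le_mul_of_nonneg_right hinvle1 (norm_nonneg _)
        _ = ‖b - 1‖ := one_mul _
        _ < r := ihb
      refine ⟨?_, hane, hbne⟩
      -- norm of b is 1
      have hbnorm : ‖b‖ = 1 := aux_norm_one_of hna (ihb.trans hrlt1)
      have hb0 : b ≠ 0 := by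
        intro h; rw [h] at hbnorm; simp at hbnorm
      set t : K := a / b with ht
      have ht1 : t - 1 = (a - b) / b := by
        rw [ht]; field_simp
      have htnorm : ‖t - 1‖ = ‖a - b‖ := by
        rw [ht1, norm_div, hbnorm, div_one]
      have htlt : ‖t - 1‖ < r := by
        rw [htnorm]
        have : a - b = (a - 1) + -(b - 1) := by ring
        rw [this]
        exact lt_of_le_of_lt ((hna _ _).trans (by rw [norm_neg]))
          (max_lt iha ihb)
      have hkey : ‖t ^ p - 1‖ = (p : ℝ)⁻¹ * ‖t - 1‖ := by
        have h := aux_key p hp hna hpK (u := t - 1) htlt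
        have he : (1 : K) + (t - 1) = t := by ring
        rw [he] at h
        exact h
      have hfact : a ^ p - b ^ p = b ^ p * (t ^ p - 1) := by
        rw [ht, div_pow, mul_sub, ← mul_div_assoc, mul_div_cancel_left₀ _ (pow_ne_zero p hb0), mul_one]
      calc ‖ρ ^ p ^ (m + 1) - q ^ p ^ (m + 1)‖ = ‖a ^ p - b ^ p‖ := by
            rw [ha, hb, ← pow_mul, ← pow_mul, ← pow_succ]
      _ = ‖b ^ p‖ * ‖t ^ p - 1‖ := by rw [hfact, norm_mul]
      _ = (p : ℝ)⁻¹ * ‖t - 1‖ := by rw [norm_pow, hbnorm, one_pow, one_mul, hkey]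
      _ = (p : ℝ)⁻¹ * (((p : ℝ)⁻¹) ^ m * ‖ρ - q‖) := by rw [htnorm, ihd]
      _ = ((p : ℝ)⁻¹) ^ (m + 1) * ‖ρ - q‖ := by ring
  obtain ⟨hd, _, _⟩ := main n
  have hρqne : ‖ρ - q‖ ≠ 0 := by
    simp only [ne_eq, norm_eq_zero, sub_eq_zero]
    exact hρq
  rw [pqNum, norm_div, hd, mul_div_assoc, div_self hρqne, mul_one]
  rw [zpow_neg, zpow_natCast, inv_pow]
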